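/- Let j ≥ 1 and x_1, …, x_j ∈ C([0,1]) be fixed. Then the map x ↦ λ(conv(graph({x_1, …, x_j, x}))) is continuous from (C([0,1]), ‖·‖_∞) to ℝ. -/

import Mathlib

open MeasureTheory Filter Topology
open scoped ENNReal

noncomputable section

abbrev I01 : Set ℝ := Set.Icc 0 1

abbrev CI := C(I01, ℝ)

noncomputable instance : MeasurableSpace CI := borel CI
instance : BorelSpace CI := ⟨rfl⟩

/-- The graph of a continuous function on `[0,1]`, as a subset of `ℝ²`. -/
def graph (x : CI) : Set (ℝ × ℝ) := Set.range fun t : I01 => ((t : ℝ), x t)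

/-- The area (2-dimensional Lebesgue measure) of the convex hull of a set in `ℝ²`. -/
def ach (A : Set (ℝ × ℝ)) : ℝ := (volume (convexHull ℝ A)).toReal

/-- Ratio of the area of the convex hull of the graphs of a batch of curves to the area of
the convex hull once `x` is added (`0/0 = 0` convention, as division by zero is zero). -/
def achRatio {m : ℕ} (xs : Fin m → CI) (x : CI) : ℝ :=
  ach (⋃ i, graph (xs i)) / ach ((⋃ i, graph (xs i)) ∪ graph x)

/-- The ACH depth of degree `J` of `x` w.r.t. `P`. -/
def ACHDepth (J : ℕ) (P : Measure CI) (x : CI) : ℝ :=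
  ∫ xs, achRatio xs x ∂(Measure.pi fun _ : Fin J => P)

/-- The average ACH depth of degree `J`. -/
def avgACHDepth (J : ℕ) (P : Measure CI) (x : CI) : ℝ :=
  (J : ℝ)⁻¹ * ∑ j ∈ Finset.Icc 1 J, ACHDepth j P x

/-- A curve is non-constant. -/
def Nonconstant (x : CI) : Prop := ¬ ∃ c : ℝ, ∀ t, x t = c

/-- The empirical ACH depth (`U`-statistic of degree `J`) based on the first `n` curves. -/
def empDepth (J n : ℕ) (X : ℕ → CI) (x : CI) : ℝ :=
  (n.choose J : ℝ)⁻¹ * ∑ s ∈ Finset.powersetCard J (Finset.range n),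
    ach (⋃ i ∈ s, graph (X i)) / ach ((⋃ i ∈ s, graph (X i)) ∪ graph x)

/-- The average empirical ACH depth. -/
def avgEmpDepth (J n : ℕ) (X : ℕ → CI) (x : CI) : ℝ :=
  (J : ℝ)⁻¹ * ∑ j ∈ Finset.Icc 1 J, empDepth j n X x

/-- The band delimited by a finite family of curves. -/
def band {m : ℕ} (xs : Fin m → CI) : Set (ℝ × ℝ) :=
  {p | ∃ t : I01, p.1 = (t : ℝ) ∧ (⨅ i, xs i t) ≤ p.2 ∧ p.2 ≤ ⨆ i, xs i t}
open Metric

lemma aux_sep {E : Type*} [NormedAddCommGroup E] [NormedSpace ℝ E]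
    {C : Set E} (hC : Convex ℝ C) (hcl : IsClosed C) (hne : C.Nonempty)
    {ε : ℝ} (hε : 0 < ε) {p : E} (hball : closedBall p (2 * ε) ⊆ cthickening ε C) :
    p ∈ C := by
  by_contra hp
  obtain ⟨f, u, hfC, hfp⟩ := geometric_hahn_banach_closed_point hC hcl hp
  have hf0 : f ≠ 0 := by
    rintro rfl
    obtain ⟨a, ha⟩ := hne
    have := (hfC a ha).trans hfp
    simp at this
  have hfpos : 0 < ‖f‖ := norm_pos_iff.mpr hf0
  have key : ∀ v : E, f v ≤ ‖f‖ / 2 * ‖v‖ := by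
    intro v
    rcases eq_or_ne v 0 with rfl | hv
    · simp
    have hnv : 0 < ‖v‖ := norm_pos_iff.mpr hv
    set c : ℝ := 2 * ε / ‖v‖ with hc
    have hcpos : 0 < c := by positivity
    set q : E := p + c • v with hq
    have hqball : q ∈ closedBall p (2 * ε) := by
      simp only [hq, mem_closedBall, dist_self_add_left, norm_smul, Real.norm_eq_abs,
        abs_of_pos hcpos]
      rw [hc]
      field_simp
      exact le_rfl
    have hqc : q ∈ cthickening ε C := hball hqball
    have step : ∀ η : ℝ, 0 < η → c * f v < ‖f‖ * ε + η := by
      intro η hη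
      have h1 : q ∈ thickening (ε + η / ‖f‖) C :=
        cthickening_subset_thickening' (by positivity)
          (by have := div_pos hη hfpos; linarith) C hqc
      obtain ⟨a, haC, hqa⟩ := (mem_thickening_iff_infDist_lt hne).mp h1 |> fun h =>
        (infDist_lt_iff hne).mp h
      have hfa : f a < u := hfC a haC
      have hdiff : f q - f a ≤ ‖f‖ * dist q a := by
        calc f q - f a = f (q - a) := by rw [map_sub]
        _ ≤ ‖f (q - a)‖ := le_abs_self _
        _ ≤ ‖f‖ * ‖q - a‖ := f.le_opNorm _
        _ = ‖f‖ * dist q a := by rw [dist_eq_norm]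
      have hfq : f q = f p + c * f v := by simp [hq, map_add, _root_.map_smul]
      have hstep : f p + c * f v < u + ‖f‖ * (ε + η / ‖f‖) := by
        rw [← hfq]
        calc f q ≤ f a + ‖f‖ * dist q a := by linarith
        _ < u + ‖f‖ * (ε + η / ‖f‖) := by
            have := mul_lt_mul_of_pos_left hqa hfpos
            linarith
      have hexp : ‖f‖ * (ε + η / ‖f‖) = ‖f‖ * ε + η := by field_simp
      rw [hexp] at hstep
      linarith
    have hle : c * f v ≤ ‖f‖ * ε := by
      by_contra hlt
      push_neg at hlt
      have := step ((c * f v - ‖f‖ * ε) / 2) (by linarith)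
      linarith
    have hfv : f v ≤ ‖f‖ * ε / c := by
      rw [le_div_iff₀ hcpos]
      nlinarith [hle]
    calc f v ≤ ‖f‖ * ε / c := hfv
    _ = ‖f‖ / 2 * ‖v‖ := by rw [hc]; field_simp
  have hnorm : ‖f‖ ≤ ‖f‖ / 2 := by
    refine f.opNorm_le_bound (by positivity) fun v => ?_
    rw [Real.norm_eq_abs, abs_le]
    constructor
    · have := key (-v)
      simp only [map_neg, norm_neg] at this
      linarith
    · exact key v
  linarith

lemma graph_compact (x : CI) : IsCompact (graph x) :=
  isCompact_range (continuous_subtype_val.prodMk x.continuous)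

lemma graph_nonempty (x : CI) : (graph x).Nonempty :=
  ⟨_, ⟨(⟨0, by norm_num⟩ : I01), rfl⟩⟩

lemma Kc_subset_cthickening (A : Set (ℝ × ℝ)) {ε : ℝ} {x y : CI} (h : dist y x ≤ ε) :
    closure (convexHull ℝ (A ∪ graph y)) ⊆
      cthickening ε (closure (convexHull ℝ (A ∪ graph x))) := by
  refine closure_minimal (convexHull_min ?_
    (((convex_convexHull ℝ _).closure).cthickening ε)) isClosed_cthickening
  rintro p (hp | hp)
  · exact self_subset_cthickening _
      (subset_closure (subset_convexHull ℝ _ (Set.mem_union_left _ hp)))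
  · obtain ⟨t, rfl⟩ := hp
    refine mem_cthickening_of_dist_le _ ((t : ℝ), x t) ε _
      (subset_closure (subset_convexHull ℝ _ (Set.mem_union_right _ ⟨t, rfl⟩))) ?_
    rw [Prod.dist_eq]
    simp only [dist_self]
    exact max_le (le_trans dist_nonneg h) (le_trans (ContinuousMap.dist_apply_le_dist t) h)

/-- for fixed curves `x₁, …, x_j`, the map
`x ↦ λ(conv(graph({x₁, …, x_j, x})))` is continuous on `(C([0,1]), ‖·‖_∞)`. -/
theorem continuous_ach_insert (j : ℕ) (hj : 1 ≤ j) (xs : Fin j → CI) :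
    Continuous fun x : CI => ach ((⋃ i, graph (xs i)) ∪ graph x) := by
  set A := ⋃ i, graph (xs i) with hA
  have hAcomp : IsCompact A := isCompact_iUnion fun i => graph_compact _
  set K : CI → Set (ℝ × ℝ) := fun y => closure (convexHull ℝ (A ∪ graph y)) with hK
  have hKconv : ∀ y, Convex ℝ (K y) := fun y => (convex_convexHull ℝ _).closure
  have hKclosed : ∀ y, IsClosed (K y) := fun y => isClosed_closure
  have hKne : ∀ y, (K y).Nonempty := fun y =>
    (graph_nonempty y).mono ((Set.subset_union_right).trans
      ((subset_convexHull ℝ _).trans subset_closure))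
  have hKvol : ∀ y, volume (K y) = volume (convexHull ℝ (A ∪ graph y)) := by
    intro y
    refine le_antisymm ?_ (measure_mono subset_closure)
    calc volume (K y)
        ≤ volume (convexHull ℝ (A ∪ graph y) ∪ frontier (convexHull ℝ (A ∪ graph y))) :=
          measure_mono (closure_eq_self_union_frontier _).subset
      _ ≤ volume (convexHull ℝ (A ∪ graph y)) + volume (frontier (convexHull ℝ (A ∪ graph y))) :=
          measure_union_le _ _
      _ = volume (convexHull ℝ (A ∪ graph y)) := by
          rw [(convex_convexHull ℝ _).addHaar_frontier volume, add_zero]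
  have hach : ∀ y, ach (A ∪ graph y) = (volume (K y)).toReal := fun y => by
    rw [ach, hKvol]
  refine continuous_iff_continuousAt.mpr fun x₀ => Metric.continuousAt_iff.mpr fun δ hδ => ?_
  have hKcomp : IsCompact (K x₀) :=
    Metric.isCompact_of_isClosed_isBounded (hKclosed x₀)
      ((isBounded_convexHull.mpr (hAcomp.union (graph_compact x₀)).isBounded).closure)
  set V := volume (K x₀) with hV
  have hVne : V ≠ ⊤ := hKcomp.measure_lt_top.ne
  have hVlt : V < V + ENNReal.ofReal δ :=
    ENNReal.lt_add_right hVne (ENNReal.ofReal_pos.mpr hδ).ne'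
  have h1 : ∀ᶠ r in 𝓝 (0 : ℝ), volume (cthickening r (K x₀)) < V + ENNReal.ofReal δ :=
    (tendsto_measure_cthickening_of_isCompact hKcomp).eventually_lt_const hVlt
  obtain ⟨ε₁, hε₁, hε₁pos⟩ := ((h1.filter_mono nhdsWithin_le_nhds).and
    (self_mem_nhdsWithin (s := Set.Ioi (0:ℝ)))).exists
  -- lower bound sets
  set S : ℕ → Set (ℝ × ℝ) := fun n => {p | closedBall p (2 * (1 / (n + 1))) ⊆ K x₀} with hS
  have hmono : Monotone S := by
    intro n m hnm p hp
    refine (closedBall_subset_closedBall ?_).trans hp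
    have h' : (1 : ℝ) / (m + 1) ≤ 1 / (n + 1) :=
      one_div_le_one_div_of_le (by positivity) (by exact_mod_cast Nat.succ_le_succ hnm)
    linarith
  have hsub_inter : interior (K x₀) ⊆ ⋃ n, S n := by
    intro p hp
    obtain ⟨r, hr, hball⟩ := Metric.isOpen_iff.mp isOpen_interior p hp
    obtain ⟨n, hn⟩ := exists_nat_gt (2 / r)
    refine Set.mem_iUnion.mpr ⟨n, ?_⟩
    have h2 : 2 * (1 / ((n : ℝ) + 1)) < r := by
      rw [div_lt_iff₀ hr] at hn
      rw [mul_one_div, div_lt_iff₀ (by positivity)]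
      nlinarith
    exact (closedBall_subset_ball h2).trans (hball.trans interior_subset)
  have hSsub : ∀ n, S n ⊆ K x₀ := fun n p hp => hp (mem_closedBall_self (by positivity))
  have hμU : volume (⋃ n, S n) = V := by
    refine le_antisymm (measure_mono (Set.iUnion_subset hSsub)) ?_
    calc V ≤ volume (interior (K x₀) ∪ frontier (K x₀)) := by
          refine measure_mono ?_
          nth_rewrite 1 [← (hKclosed x₀).closure_eq]
          rw [closure_eq_interior_union_frontier]
      _ ≤ volume (interior (K x₀)) + volume (frontier (K x₀)) := measure_union_le _ _
      _ = volume (interior (K x₀)) := by rw [(hKconv x₀).addHaar_frontier volume, add_zero]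
      _ ≤ volume (⋃ n, S n) := measure_mono hsub_inter
  have h2 : Tendsto (fun n => volume (S n)) atTop (𝓝 V) := by
    have := tendsto_measure_iUnion_atTop (μ := volume) hmono
    rw [hμU] at this
    exact this
  have hexists : ∃ n : ℕ, V < volume (S n) + ENNReal.ofReal δ := by
    rcases eq_or_ne V 0 with hV0 | hV0
    · exact ⟨0, by
        rw [hV0]
        exact lt_of_lt_of_le (by simpa using ENNReal.ofReal_pos.mpr hδ) le_add_self⟩
    · have hlt : V - ENNReal.ofReal δ < V :=
        ENNReal.sub_lt_self hVne hV0 (ENNReal.ofReal_pos.mpr hδ).ne'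
      obtain ⟨n, hn⟩ := (h2.eventually_const_lt hlt).exists
      exact ⟨n, (ENNReal.cancel_of_ne ENNReal.ofReal_ne_top).lt_add_of_tsub_lt_right hn⟩
  obtain ⟨n, hn⟩ := hexists
  set ε₂ : ℝ := 1 / (n + 1) with hε₂
  have hε₂pos : 0 < ε₂ := by positivity
  refine ⟨min ε₁ ε₂, lt_min hε₁pos hε₂pos, fun {y} hy => ?_⟩
  have hy₁ : dist y x₀ ≤ ε₁ := (hy.trans_le (min_le_left _ _)).le
  have hy₂ : dist y x₀ ≤ ε₂ := (hy.trans_le (min_le_right _ _)).le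
  -- upper bound
  have hup : volume (K y) < V + ENNReal.ofReal δ :=
    lt_of_le_of_lt (measure_mono (Kc_subset_cthickening A hy₁)) hε₁
  -- lower bound
  have hSnKy : S n ⊆ K y := by
    intro p hp
    refine aux_sep (hKconv y) (hKclosed y) (hKne y) hε₂pos (p := p) ?_
    refine (Set.Subset.trans hp ?_)
    refine Kc_subset_cthickening A ?_
    rw [dist_comm]
    exact hy₂
  have hlow : V < volume (K y) + ENNReal.ofReal δ :=
    lt_of_lt_of_le hn (add_le_add_left (measure_mono hSnKy) _)
  -- convert to reals
  have hKyfin : volume (K y) ≠ ⊤ :=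
    (hup.trans_le le_top).ne
  have haddfin : V + ENNReal.ofReal δ ≠ ⊤ :=
    ENNReal.add_ne_top.mpr ⟨hVne, ENNReal.ofReal_ne_top⟩
  have hKyaddfin : volume (K y) + ENNReal.ofReal δ ≠ ⊤ :=
    ENNReal.add_ne_top.mpr ⟨hKyfin, ENNReal.ofReal_ne_top⟩
  have hupR : (volume (K y)).toReal < V.toReal + δ := by
    have := (ENNReal.toReal_lt_toReal hKyfin haddfin).mpr hup
    rwa [ENNReal.toReal_add hVne ENNReal.ofReal_ne_top, ENNReal.toReal_ofReal hδ.le] at this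
  have hlowR : V.toReal < (volume (K y)).toReal + δ := by
    have := (ENNReal.toReal_lt_toReal hVne hKyaddfin).mpr hlow
    rwa [ENNReal.toReal_add hKyfin ENNReal.ofReal_ne_top, ENNReal.toReal_ofReal hδ.le] at this
  simp only [hach]
  rw [Real.dist_eq, abs_sub_lt_iff]
  exact ⟨by linarith, by linarith⟩


end
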